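/- (Deterministic form of the per-step progress lemma, Lemma 6.) Let f : 2^𝒮 → ℝ be non-negative submodular with multilinear extension F, let ℓ : 𝒮 → ℝ be weights with linear extension L, and set τ = max_{s∈𝒮} f({s}). Let ε > 0, let 0 < δ ≤ ε/n² with δ ≤ 1, and let c ∈ (0,1]. Let x, z ∈ [0,1]^𝒮, set x′ = x + δ·(z ⊙ (1−x)) where ⊙ is the coordinatewise (Hadamard) product, and let w : 𝒮 → ℝ satisfy |w(s) − (F(x ∨ 1_{{s}}) − F(x ∧ 1_{𝒮∖{s}}))| ≤ 2ετ/n for every s ∈ 𝒮. Let O ⊆ 𝒮 satisfy Σ_{s∈𝒮} z(s)(1−x(s))·(c·w(s) + ℓ(s)) ≥ Σ_{o∈O} (1−x(o))·(c·w(o) + ℓ(o)). Then ((1+δ)·c·F(x′) + L(x′) − c·F(x) − L(x))/δ ≥ c·(F(x ∨ 1_O) + F(x′) − F(x)) + Σ_{o∈O} ℓ(o)(1−x(o)) − 5ετ. -/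

import Mathlib

set_option linter.unusedSectionVars false
set_option linter.unreachableTactic false
set_option linter.unusedTactic false
set_option maxHeartbeats 1000000
open Finset

/-- The multilinear extension of a set function `f` on a finite ground set. -/
noncomputable def multilinearExt {S : Type*} [Fintype S] [DecidableEq S]
    (f : Finset S → ℝ) (x : S → ℝ) : ℝ :=
  ∑ A : Finset S, f A * (∏ s ∈ A, x s) * ∏ s ∈ Aᶜ, (1 - x s)

/-- The 0/1 indicator vector of a subset `A`. -/
def indVec {S : Type*} [DecidableEq S] (A : Finset S) : S → ℝ :=
  fun s => if s ∈ A then 1 else 0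

/-- Submodularity of a set function. -/
def Submodular {S : Type*} [DecidableEq S] (f : Finset S → ℝ) : Prop :=
  ∀ A B : Finset S, A ⊆ B → ∀ s, s ∉ B →
    f (insert s B) - f B ≤ f (insert s A) - f A

namespace PerStepAux

variable {S : Type*} [Fintype S] [DecidableEq S]

def Dmarg (f : Finset S → ℝ) (s : S) : Finset S → ℝ :=
  fun A => f (insert s A) - f (A.erase s)

lemma insert_erase_self (a : S) (A : Finset S) : insert a (A.erase a) = insert a A := by
  ext t; simp [Finset.mem_erase, Finset.mem_insert]; tauto

lemma mExt_eq' (f : Finset S → ℝ) (y : S → ℝ) :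
    multilinearExt f y = ∑ A : Finset S, f A * ((∏ s ∈ A, y s) * ∏ s ∈ Aᶜ, (1 - y s)) := by
  unfold multilinearExt; exact Finset.sum_congr rfl fun A _ => by ring

lemma weight_nonneg {y : S → ℝ} (hy : ∀ t, y t ∈ Set.Icc (0:ℝ) 1) (A : Finset S) :
    0 ≤ (∏ s ∈ A, y s) * ∏ s ∈ Aᶜ, (1 - y s) :=
  mul_nonneg (Finset.prod_nonneg fun s _ => (hy s).1)
    (Finset.prod_nonneg fun s _ => by linarith [(hy s).2])

lemma sum_weight (y : S → ℝ) :
    ∑ A : Finset S, (∏ s ∈ A, y s) * ∏ s ∈ Aᶜ, (1 - y s) = 1 := by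
  calc ∑ A : Finset S, (∏ s ∈ A, y s) * ∏ s ∈ Aᶜ, (1 - y s)
      = ∑ A ∈ (univ : Finset S).powerset, (∏ i ∈ A, y i) * ∏ i ∈ univ \ A, (1 - y i) := by
        rw [Finset.powerset_univ]
        exact Finset.sum_congr rfl fun A _ => by rw [Finset.compl_eq_univ_sdiff]
    _ = ∏ i : S, (y i + (1 - y i)) := (Finset.prod_add y (fun s => 1 - y s) univ).symm
    _ = 1 := by simp

lemma mExt_sub (g h : Finset S → ℝ) (y : S → ℝ) :
    multilinearExt (fun A => g A - h A) y = multilinearExt g y - multilinearExt h y := by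
  rw [mExt_eq', mExt_eq', mExt_eq', ← Finset.sum_sub_distrib]
  exact Finset.sum_congr rfl fun A _ => by ring

lemma mExt_const (C : ℝ) (y : S → ℝ) : multilinearExt (fun _ => C) y = C := by
  rw [mExt_eq', ← Finset.mul_sum, sum_weight, mul_one]

lemma mExt_le_mExt {y : S → ℝ} (hy : ∀ t, y t ∈ Set.Icc (0:ℝ) 1) {g h : Finset S → ℝ}
    (hgh : ∀ A, g A ≤ h A) : multilinearExt g y ≤ multilinearExt h y := by
  rw [mExt_eq', mExt_eq']
  exact Finset.sum_le_sum fun A _ => mul_le_mul_of_nonneg_right (hgh A) (weight_nonneg hy A)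

lemma mExt_le_const {y : S → ℝ} (hy : ∀ t, y t ∈ Set.Icc (0:ℝ) 1) {g : Finset S → ℝ} {C : ℝ}
    (hgC : ∀ A, g A ≤ C) : multilinearExt g y ≤ C := by
  calc multilinearExt g y ≤ multilinearExt (fun _ => C) y := mExt_le_mExt hy hgC
  _ = C := mExt_const C y

lemma expand (g : Finset S → ℝ) (y : S → ℝ) (u : S) :
    multilinearExt g y = ∑ t ∈ ((univ : Finset S).erase u).powerset,
      ((1 - y u) * (g t * ((∏ s ∈ t, y s) * ∏ s ∈ tᶜ.erase u, (1 - y s)))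
        + y u * (g (insert u t) * ((∏ s ∈ t, y s) * ∏ s ∈ tᶜ.erase u, (1 - y s)))) := by
  rw [mExt_eq']
  have e1 : ∑ A : Finset S, g A * ((∏ s ∈ A, y s) * ∏ s ∈ Aᶜ, (1 - y s))
      = ∑ A ∈ (insert u ((univ : Finset S).erase u)).powerset,
          g A * ((∏ s ∈ A, y s) * ∏ s ∈ Aᶜ, (1 - y s)) := by
    rw [Finset.insert_erase (Finset.mem_univ u), Finset.powerset_univ]
  rw [e1, Finset.sum_powerset_insert (Finset.notMem_erase u univ), ← Finset.sum_add_distrib]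
  refine Finset.sum_congr rfl fun t ht => ?_
  have hut : u ∉ t := fun h => (Finset.mem_erase.mp ((Finset.mem_powerset.mp ht) h)).1 rfl
  have huc : u ∈ tᶜ := Finset.mem_compl.mpr hut
  rw [Finset.prod_insert hut, Finset.compl_insert,
    ← Finset.mul_prod_erase tᶜ (fun s => 1 - y s) huc]
  ring

lemma mExt_update (g : Finset S → ℝ) (y : S → ℝ) (u : S) (r : ℝ) :
    multilinearExt g (Function.update y u r)
      = (1 - r) * multilinearExt (fun A => g (A.erase u)) y
        + r * multilinearExt (fun A => g (insert u A)) y := by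
  rw [expand g (Function.update y u r) u, expand (fun A => g (A.erase u)) y u,
    expand (fun A => g (insert u A)) y u, Finset.mul_sum, Finset.mul_sum,
    ← Finset.sum_add_distrib]
  refine Finset.sum_congr rfl fun t ht => ?_
  have hut : u ∉ t := fun h => (Finset.mem_erase.mp ((Finset.mem_powerset.mp ht) h)).1 rfl
  have h1 : ∏ s ∈ t, Function.update y u r s = ∏ s ∈ t, y s :=
    Finset.prod_congr rfl fun s hs => Function.update_of_ne (by rintro rfl; exact hut hs) r y
  have h2 : ∏ s ∈ tᶜ.erase u, (1 - Function.update y u r s) = ∏ s ∈ tᶜ.erase u, (1 - y s) :=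
    Finset.prod_congr rfl fun s hs => by
      rw [Function.update_of_ne (Finset.mem_erase.mp hs).1 r y]
  rw [h1, h2, Function.update_self, Finset.erase_eq_of_notMem hut, Finset.erase_insert hut,
    Finset.insert_idem]
  ring

lemma mExt_update_one (g : Finset S → ℝ) (y : S → ℝ) (u : S) :
    multilinearExt g (Function.update y u 1)
      = multilinearExt (fun A => g (insert u A)) y := by
  rw [mExt_update]; ring

lemma mExt_update_zero (g : Finset S → ℝ) (y : S → ℝ) (u : S) :
    multilinearExt g (Function.update y u 0)
      = multilinearExt (fun A => g (A.erase u)) y := by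
  rw [mExt_update]; ring

lemma mExt_sum (T : Finset S) (g : S → Finset S → ℝ) (y : S → ℝ) :
    multilinearExt (fun A => ∑ v ∈ T, g v A) y = ∑ v ∈ T, multilinearExt (g v) y := by
  rw [mExt_eq']
  rw [Finset.sum_congr rfl fun A _ => Finset.sum_mul (T) (fun v => g v A) _]
  rw [Finset.sum_comm]
  exact Finset.sum_congr rfl fun v _ => (mExt_eq' (g v) y).symm

lemma mExt_add (g h : Finset S → ℝ) (y : S → ℝ) :
    multilinearExt (fun A => g A + h A) y = multilinearExt g y + multilinearExt h y := by
  rw [mExt_eq', mExt_eq', mExt_eq', ← Finset.sum_add_distrib]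
  exact Finset.sum_congr rfl fun A _ => by ring

lemma mExt_smul (C : ℝ) (g : Finset S → ℝ) (y : S → ℝ) :
    multilinearExt (fun A => C * g A) y = C * multilinearExt g y := by
  rw [mExt_eq', mExt_eq', Finset.mul_sum]
  exact Finset.sum_congr rfl fun A _ => by ring

lemma sub_weight_sum (y : S → ℝ) (u : S) :
    ∑ t ∈ ((univ : Finset S).erase u).powerset,
      ((∏ s ∈ t, y s) * ∏ s ∈ tᶜ.erase u, (1 - y s)) = 1 := by
  have h := expand (fun _ => (1:ℝ)) y u
  rw [mExt_const] at h
  rw [Finset.sum_congr rfl (fun t _ =>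
    (by ring : (∏ s ∈ t, y s) * ∏ s ∈ tᶜ.erase u, (1 - y s)
      = (1 - y u) * ((1:ℝ) * ((∏ s ∈ t, y s) * ∏ s ∈ tᶜ.erase u, (1 - y s)))
        + y u * ((1:ℝ) * ((∏ s ∈ t, y s) * ∏ s ∈ tᶜ.erase u, (1 - y s)))))]
  exact h.symm

lemma mExt_ind (y : S → ℝ) (u : S) :
    multilinearExt (fun A => if u ∈ A then (1:ℝ) else 0) y = y u := by
  rw [expand (fun A => if u ∈ A then (1:ℝ) else 0) y u]
  have hcg : ∀ t ∈ ((univ : Finset S).erase u).powerset,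
      ((1 - y u) * ((if u ∈ t then (1:ℝ) else 0)
          * ((∏ s ∈ t, y s) * ∏ s ∈ tᶜ.erase u, (1 - y s)))
        + y u * ((if u ∈ insert u t then (1:ℝ) else 0)
          * ((∏ s ∈ t, y s) * ∏ s ∈ tᶜ.erase u, (1 - y s))))
      = y u * ((∏ s ∈ t, y s) * ∏ s ∈ tᶜ.erase u, (1 - y s)) := by
    intro t ht
    have hut : u ∉ t := fun h => (Finset.mem_erase.mp ((Finset.mem_powerset.mp ht) h)).1 rfl
    rw [if_neg hut, if_pos (Finset.mem_insert_self u t)]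
    ring
  rw [Finset.sum_congr rfl hcg, ← Finset.mul_sum, sub_weight_sum, mul_one]

section Pointwise

variable {f : Finset S → ℝ} {τ : ℝ}

lemma marg_le (hf : Submodular f) (hf0 : ∀ A, 0 ≤ f A) (hτs : ∀ s : S, f {s} ≤ τ)
    {A : Finset S} {u : S} (hu : u ∉ A) : f (insert u A) - f A ≤ τ := by
  have h := hf ∅ A (Finset.empty_subset A) u hu
  have e : insert u (∅ : Finset S) = {u} := rfl
  rw [e] at h
  linarith [hf0 ∅, hτs u]

lemma Dmarg_le_tau (hf : Submodular f) (hf0 : ∀ A, 0 ≤ f A) (hτs : ∀ s : S, f {s} ≤ τ)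
    (s : S) (A : Finset S) : Dmarg f s A ≤ τ := by
  have h := marg_le hf hf0 hτs (Finset.notMem_erase s A)
  rw [insert_erase_self] at h
  exact h

lemma Dmarg_anti (hf : Submodular f) {A B : Finset S} (hAB : A ⊆ B) (v : S) :
    Dmarg f v B ≤ Dmarg f v A := by
  have h := hf (A.erase v) (B.erase v) (Finset.erase_subset_erase v hAB) v
    (Finset.notMem_erase v B)
  rw [insert_erase_self, insert_erase_self] at h
  exact h

lemma neg_Dmarg_le_beta (hf : Submodular f) (v : S) (A : Finset S) :
    -(Dmarg f v A) ≤ f ((univ : Finset S).erase v) - f univ := by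
  have h := Dmarg_anti hf (Finset.subset_univ A) v
  unfold Dmarg at h ⊢
  have e : insert v (univ : Finset S) = univ := by simp
  rw [e] at h
  linarith

lemma f_le_card (hf : Submodular f) (hf0 : ∀ A, 0 ≤ f A) (hτs : ∀ s : S, f {s} ≤ τ) :
    ∀ A : Finset S, A.Nonempty → f A ≤ (A.card : ℝ) * τ := by
  intro A
  induction A using Finset.induction_on with
  | empty => intro h; exact absurd h (by simp)
  | @insert a B ha IH =>
    intro _
    rcases B.eq_empty_or_nonempty with rfl | hB
    · have : insert a (∅ : Finset S) = {a} := rfl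
      rw [this]
      simpa using hτs a
    · have h1 : f (insert a B) - f B ≤ τ := marg_le hf hf0 hτs ha
      have h2 := IH hB
      rw [Finset.card_insert_of_notMem ha]
      push_cast
      linarith

lemma pairSym (f : Finset S → ℝ) {s v : S} (hsv : s ≠ v) (A : Finset S) :
    Dmarg f s (A.erase v) - Dmarg f s (insert v A)
      = Dmarg f v (A.erase s) - Dmarg f v (insert s A) := by
  have hvs : v ≠ s := hsv.symm
  set A0 : Finset S := (A.erase s).erase v with hA0
  have e1 : insert s (A.erase v) = insert s A0 := by
    ext t; by_cases h1 : t = s <;> by_cases h2 : t = v <;>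
      simp [hA0, h1, h2, hsv, hvs, Finset.mem_erase, Finset.mem_insert] <;> tauto
  have e2 : (A.erase v).erase s = A0 := by
    ext t; by_cases h1 : t = s <;> by_cases h2 : t = v <;>
      simp [hA0, h1, h2, hsv, hvs, Finset.mem_erase, Finset.mem_insert] <;> tauto
  have e3 : insert s (insert v A) = insert s (insert v A0) := by
    ext t; by_cases h1 : t = s <;> by_cases h2 : t = v <;>
      simp [hA0, h1, h2, hsv, hvs, Finset.mem_erase, Finset.mem_insert] <;> tauto
  have e4 : (insert v A).erase s = insert v A0 := by
    ext t; by_cases h1 : t = s <;> by_cases h2 : t = v <;>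
      simp [hA0, h1, h2, hsv, hvs, Finset.mem_erase, Finset.mem_insert] <;> tauto
  have e5 : insert v (A.erase s) = insert v A0 := by
    ext t; by_cases h1 : t = s <;> by_cases h2 : t = v <;>
      simp [hA0, h1, h2, hsv, hvs, Finset.mem_erase, Finset.mem_insert] <;> tauto
  have e6 : (A.erase s).erase v = A0 := rfl
  have e7 : insert v (insert s A) = insert v (insert s A0) := by
    ext t; by_cases h1 : t = s <;> by_cases h2 : t = v <;>
      simp [hA0, h1, h2, hsv, hvs, Finset.mem_erase, Finset.mem_insert] <;> tauto
  have e8 : (insert s A).erase v = insert s A0 := by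
    ext t; by_cases h1 : t = s <;> by_cases h2 : t = v <;>
      simp [hA0, h1, h2, hsv, hvs, Finset.mem_erase, Finset.mem_insert] <;> tauto
  unfold Dmarg
  rw [e1, e2, e3, e4, e5, e6, e7, e8]
  have e9 : insert s (insert v A0) = insert v (insert s A0) := by
    ext t; simp [Finset.mem_insert]; tauto
  rw [e9]
  ring

end Pointwise

section Mix

def mixv (a b : S → ℝ) (T : Finset S) : S → ℝ := fun t => if t ∈ T then b t else a t

variable {a b : S → ℝ}

lemma mixv_empty : mixv a b (∅ : Finset S) = a := by
  funext t; simp [mixv]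

lemma mixv_univ : mixv a b (univ : Finset S) = b := by
  funext t; simp [mixv]

lemma mixv_insert (u : S) (T : Finset S) :
    mixv a b (insert u T) = Function.update (mixv a b T) u (b u) := by
  funext t
  rcases eq_or_ne t u with rfl | htu
  · simp [mixv, Function.update]
  · simp [mixv, Function.update, htu, Finset.mem_insert]

lemma mixv_self_update {u : S} {T : Finset S} (h : u ∉ T) :
    mixv a b T = Function.update (mixv a b T) u (a u) := by
  funext t
  rcases eq_or_ne t u with rfl | htu
  · simp [mixv, Function.update, h]
  · simp [Function.update, htu]

lemma mixv_Icc (ha : ∀ t, a t ∈ Set.Icc (0:ℝ) 1) (hb : ∀ t, b t ∈ Set.Icc (0:ℝ) 1)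
    (T : Finset S) : ∀ t, mixv a b T t ∈ Set.Icc (0:ℝ) 1 := by
  intro t; unfold mixv; split <;> [exact hb t; exact ha t]

lemma mixv_ge (hab : ∀ t, a t ≤ b t) (T : Finset S) : ∀ t, a t ≤ mixv a b T t := by
  intro t; unfold mixv; split <;> [exact hab t; exact le_refl _]

lemma mixv_le (hab : ∀ t, a t ≤ b t) (T : Finset S) : ∀ t, mixv a b T t ≤ b t := by
  intro t; unfold mixv; split <;> [exact le_refl _; exact hab t]

end Mix

section Mono

variable {f : Finset S → ℝ}

/-- derivative is antitone in the point (for submodular f). -/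
lemma mExt_Dmarg_anti (hf : Submodular f) {a b : S → ℝ}
    (ha : ∀ t, a t ∈ Set.Icc (0:ℝ) 1) (hb : ∀ t, b t ∈ Set.Icc (0:ℝ) 1)
    (hab : ∀ t, a t ≤ b t) (v : S) :
    multilinearExt (Dmarg f v) b ≤ multilinearExt (Dmarg f v) a := by
  have key : ∀ T : Finset S, multilinearExt (Dmarg f v) (mixv a b T)
      ≤ multilinearExt (Dmarg f v) a := by
    intro T
    induction T using Finset.induction_on with
    | empty => rw [mixv_empty]
    | @insert u T hu IH =>
      rw [mixv_insert u T, mExt_update]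
      have h0 : multilinearExt (Dmarg f v) (mixv a b T)
          = (1 - mixv a b T u) * multilinearExt (fun A => Dmarg f v (A.erase u)) (mixv a b T)
            + mixv a b T u * multilinearExt (fun A => Dmarg f v (insert u A)) (mixv a b T) := by
        conv_lhs => rw [mixv_self_update hu (a := a) (b := b) (u := u)]
        rw [mExt_update]
        have : mixv a b T u = a u := by simp [mixv, hu]
        rw [this]
      have hle : multilinearExt (fun A => Dmarg f v (insert u A)) (mixv a b T)
          ≤ multilinearExt (fun A => Dmarg f v (A.erase u)) (mixv a b T) :=
        mExt_le_mExt (mixv_Icc ha hb T) fun A =>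
          Dmarg_anti hf (by
            intro t ht
            rcases Finset.mem_erase.mp ht with ⟨_, h2⟩
            exact Finset.mem_insert_of_mem h2) v
      have hmu : mixv a b T u = a u := by simp [mixv, hu]
      have h1 : a u ≤ b u := hab u
      have h2 : 0 ≤ 1 - b u := by linarith [(hb u).2]
      have h0' : (1 - a u) * multilinearExt (fun A => Dmarg f v (A.erase u)) (mixv a b T)
          + a u * multilinearExt (fun A => Dmarg f v (insert u A)) (mixv a b T)
          ≤ multilinearExt (Dmarg f v) a := by
        rw [← hmu, ← h0]; exact IH
      nlinarith [hle, h1, h2, (ha u).1]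
  have := key univ
  rwa [mixv_univ] at this

end Mono

section Subst

/-- substitution: setting the coordinates in `O` to 1. -/
lemma mExt_subst (O : Finset S) : ∀ (g : Finset S → ℝ) (y : S → ℝ),
    multilinearExt g (fun t => if t ∈ O then 1 else y t)
      = multilinearExt (fun A => g (A ∪ O)) y := by
  induction O using Finset.induction_on with
  | empty =>
    intro g y
    have e : (fun t => if t ∈ (∅ : Finset S) then (1:ℝ) else y t) = y := by
      funext t; simp
    rw [e]
    have e2 : (fun A : Finset S => g (A ∪ ∅)) = g := by funext A; simp
    rw [e2]
  | @insert o O' ho IH =>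
    intro g y
    have e : (fun t => if t ∈ insert o O' then (1:ℝ) else y t)
        = (fun t => if t ∈ O' then 1 else (Function.update y o 1) t) := by
      funext t
      by_cases h1 : t ∈ O'
      · simp [h1, Finset.mem_insert_of_mem h1]
      · by_cases h2 : t = o
        · subst h2; simp [h1, Function.update_self]
        · simp [h1, h2, Function.update_of_ne h2]
    rw [e, IH g (Function.update y o 1), mExt_update_one]
    congr 1
    funext A
    congr 1
    ext t; simp [Finset.mem_insert, Finset.mem_union]; try tauto

lemma mExt_one_fun (f : Finset S → ℝ) (y : S → ℝ) :
    multilinearExt f (fun _ => (1:ℝ)) = f univ := by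
  have e : (fun _ => (1:ℝ)) = (fun t => if t ∈ (univ : Finset S) then (1:ℝ) else y t) := by
    funext t; simp
  rw [e, mExt_subst]
  have e2 : (fun A : Finset S => f (A ∪ univ)) = fun _ => f univ := by
    funext A; congr 1; ext t; simp
  rw [e2, mExt_const]

end Subst

section I5

variable {f : Finset S → ℝ}

/-- F(y ∨ 1_O) ≤ F(y) + ∑_{o∈O} (1-y o) ∂_o F(y). -/
lemma I5 (hf : Submodular f) {y : S → ℝ} (hy : ∀ t, y t ∈ Set.Icc (0:ℝ) 1) :
    ∀ O : Finset S, multilinearExt f (fun t => if t ∈ O then 1 else y t)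
      ≤ multilinearExt f y + ∑ o ∈ O, (1 - y o) * multilinearExt (Dmarg f o) y := by
  intro O
  induction O using Finset.induction_on with
  | empty =>
    have e : (fun t => if t ∈ (∅ : Finset S) then (1:ℝ) else y t) = y := by funext t; simp
    rw [e]; simp
  | @insert o O' ho IH =>
    set vO : S → ℝ := (fun t => if t ∈ O' then 1 else y t) with hvO
    have e : (fun t => if t ∈ insert o O' then (1:ℝ) else y t) = Function.update vO o 1 := by
      funext t
      by_cases h2 : t = o
      · subst h2; simp [hvO, Function.update_self, Finset.mem_insert_self]
      · by_cases h1 : t ∈ O' <;>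
          simp [hvO, h1, h2, Function.update_of_ne h2, Finset.mem_insert]
    have e0 : vO = Function.update vO o (y o) := by
      funext t
      by_cases h2 : t = o
      · subst h2; simp [hvO, Function.update_self, ho]
      · simp [Function.update_of_ne h2]
    have hvOid : multilinearExt f vO
        = (1 - y o) * multilinearExt (fun A => f (A.erase o)) vO
          + y o * multilinearExt (fun A => f (insert o A)) vO := by
      conv_lhs => rw [e0]
      exact mExt_update f vO o (y o)
    have step : multilinearExt f (Function.update vO o 1)
        = multilinearExt f vO + (1 - y o) *
          (multilinearExt (fun A => f (insert o A)) vO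
            - multilinearExt (fun A => f (A.erase o)) vO) := by
      rw [mExt_update_one, hvOid]
      ring
    have hD : multilinearExt (fun A => f (insert o A)) vO
          - multilinearExt (fun A => f (A.erase o)) vO
        = multilinearExt (Dmarg f o) vO := by
      rw [← mExt_sub]; rfl
    have hsub : multilinearExt (Dmarg f o) vO ≤ multilinearExt (Dmarg f o) y := by
      rw [hvO, mExt_subst O' (Dmarg f o) y]
      exact mExt_le_mExt hy fun A => Dmarg_anti hf Finset.subset_union_left o
    have hyo : 0 ≤ 1 - y o := by linarith [(hy o).2]
    rw [e, step, hD, Finset.sum_insert ho]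
    have := mul_le_mul_of_nonneg_left hsub hyo
    linarith [IH]

end I5

section Curvature

variable {f : Finset S → ℝ} {τ δ : ℝ}

lemma Fw_le (hf : Submodular f) (hf0 : ∀ A, 0 ≤ f A) (hτs : ∀ s : S, f {s} ≤ τ)
    (hτ0 : 0 ≤ τ) (s : S) (y : S → ℝ) (hy : ∀ t, y t ∈ Set.Icc (0:ℝ) 1) :
    multilinearExt f (Function.update y s 1)
      ≤ τ * (1 + ∑ v ∈ (univ : Finset S).erase s, y v) := by
  rw [mExt_update_one]
  have hpt : ∀ A : Finset S, f (insert s A) ≤ τ * 1 + ∑ v ∈ (univ : Finset S).erase s,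
      τ * (if v ∈ A then (1:ℝ) else 0) := by
    intro A
    have h1 : f (insert s A) ≤ ((insert s A).card : ℝ) * τ :=
      f_le_card hf hf0 hτs _ (Finset.insert_nonempty s A)
    have h2 : (insert s A).card = (A.erase s).card + 1 := by
      rw [← insert_erase_self, Finset.card_insert_of_notMem (Finset.notMem_erase s A)]
    have h3 : ∑ v ∈ (univ : Finset S).erase s, (if v ∈ A then (1:ℝ) else 0)
        = ((A.erase s).card : ℝ) := by
      rw [Finset.sum_boole]
      congr 1
      congr 1
      ext v; simp [Finset.mem_erase, Finset.mem_filter]; try tauto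
    have h4 : ∑ v ∈ (univ : Finset S).erase s, τ * (if v ∈ A then (1:ℝ) else 0)
        = τ * ((A.erase s).card : ℝ) := by
      rw [← Finset.mul_sum, h3]
    rw [h2] at h1
    push_cast at h1
    rw [h4]
    nlinarith [h1]
  calc multilinearExt (fun A => f (insert s A)) y
      ≤ multilinearExt (fun A => τ * 1 + ∑ v ∈ (univ : Finset S).erase s,
          τ * (if v ∈ A then (1:ℝ) else 0)) y := mExt_le_mExt hy hpt
    _ = τ * (1 + ∑ v ∈ (univ : Finset S).erase s, y v) := by
        rw [mExt_add, mExt_const, mExt_sum]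
        have h5 : ∀ v ∈ (univ : Finset S).erase s,
            multilinearExt (fun A => τ * (if v ∈ A then (1:ℝ) else 0)) y = τ * y v :=
          fun v _ => by rw [mExt_smul, mExt_ind]
        rw [Finset.sum_congr rfl h5, ← Finset.mul_sum]
        ring

lemma xi_bound (hf : Submodular f) (hf0 : ∀ A, 0 ≤ f A) (hτs : ∀ s : S, f {s} ≤ τ)
    (hτ0 : 0 ≤ τ) (x z x' : S → ℝ)
    (hx : ∀ t, x t ∈ Set.Icc (0:ℝ) 1) (hz : ∀ t, z t ∈ Set.Icc (0:ℝ) 1)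
    (hx'def : x' = fun t => x t + δ * (z t * (1 - x t)))
    (hδ0 : 0 < δ) (hδh : δ ≤ 1/2) (s : S) :
    ∑ v ∈ (univ : Finset S).erase s, (1 - x v) *
        (multilinearExt (Dmarg f v) x
          - multilinearExt (Dmarg f v) (Function.update x' s 1))
      ≤ 3 * (Fintype.card S : ℝ) * τ := by
  set n : ℝ := (Fintype.card S : ℝ) with hn
  set w : S → ℝ := Function.update x' s 1 with hw
  have hzx : ∀ t, 0 ≤ δ * (z t * (1 - x t)) := fun t =>
    mul_nonneg hδ0.le (mul_nonneg (hz t).1 (by linarith [(hx t).2]))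
  have hzx1 : ∀ t, δ * (z t * (1 - x t)) ≤ 1 - x t := by
    intro t
    have h1 : (1 - δ * z t) * (1 - x t) ≥ 0 :=
      mul_nonneg (by nlinarith [(hz t).2, (hz t).1, hδ0.le, hδh]) (by linarith [(hx t).2])
    nlinarith
  have hx'I : ∀ t, x' t ∈ Set.Icc (0:ℝ) 1 := by
    intro t
    rw [hx'def]
    exact ⟨by dsimp only; linarith [hzx t, (hx t).1], by dsimp only; linarith [hzx1 t]⟩
  have hxx' : ∀ t, x t ≤ x' t := by
    intro t; rw [hx'def]; dsimp only
    linarith [hzx t]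
  have hwI : ∀ t, w t ∈ Set.Icc (0:ℝ) 1 := by
    intro t; rw [hw]
    rcases eq_or_ne t s with rfl | h
    · rw [Function.update_self]; exact ⟨zero_le_one, le_refl 1⟩
    · rw [Function.update_of_ne h]; exact hx'I t
  have hxw : ∀ t, x t ≤ w t := by
    intro t; rw [hw]
    rcases eq_or_ne t s with rfl | h
    · rw [Function.update_self]; exact (hx t).2
    · rw [Function.update_of_ne h]; exact hxx' t
  -- abbreviations
  set G : S → ℝ := fun v => multilinearExt (Dmarg f v) x with hG
  set d : S → ℝ := fun v => multilinearExt (Dmarg f v) w with hd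
  have hGle : ∀ v, G v ≤ τ := fun v => mExt_le_const hx (Dmarg_le_tau hf hf0 hτs v)
  have hdle : ∀ v, d v ≤ τ := fun v => mExt_le_const hwI (Dmarg_le_tau hf hf0 hτs v)
  have hdG : ∀ v, d v ≤ G v := fun v => mExt_Dmarg_anti hf hx hwI hxw v
  set Xi : ℝ := ∑ v ∈ (univ : Finset S).erase s, (1 - x v) * (τ - d v) with hXi
  have hXi0 : 0 ≤ Xi := Finset.sum_nonneg fun v _ =>
    mul_nonneg (by linarith [(hx v).2]) (by linarith [hdle v])
  have hmain : ∑ v ∈ (univ : Finset S).erase s, (1 - x v) * (G v - d v) ≤ Xi := by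
    refine Finset.sum_le_sum fun v _ => ?_
    exact mul_le_mul_of_nonneg_left (by linarith [hGle v]) (by linarith [(hx v).2])
  -- I2 : f univ ≤ F(w) + ∑ (1 - x' v) d v
  have hI2 : f univ ≤ multilinearExt f w
      + ∑ v ∈ (univ : Finset S).erase s, (1 - x' v) * d v := by
    have h5 := I5 hf hwI ((univ : Finset S).erase s)
    have e1 : (fun t => if t ∈ (univ : Finset S).erase s then (1:ℝ) else w t)
        = fun _ => (1:ℝ) := by
      funext t
      rcases eq_or_ne t s with rfl | h
      · simp [hw, Function.update_self]
      · simp [Finset.mem_erase, h]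
    rw [e1, mExt_one_fun f x] at h5
    have e2 : ∑ v ∈ (univ : Finset S).erase s, (1 - w v) * multilinearExt (Dmarg f v) w
        = ∑ v ∈ (univ : Finset S).erase s, (1 - x' v) * d v := by
      refine Finset.sum_congr rfl fun v hv => ?_
      rw [hw, Function.update_of_ne (Finset.mem_erase.mp hv).1]
    rw [e2] at h5
    exact h5
  -- I3 : F(w) ≤ τ (1 + ∑ x' v)
  have hI3 : multilinearExt f w ≤ τ * (1 + ∑ v ∈ (univ : Finset S).erase s, x' v) :=
    Fw_le hf hf0 hτs hτ0 s x' hx'I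
  -- splitting
  have hsplit : ∑ v ∈ (univ : Finset S).erase s, (1 - x v) * d v
      = (∑ v ∈ (univ : Finset S).erase s, (1 - x' v) * d v)
        + ∑ v ∈ (univ : Finset S).erase s, (x' v - x v) * d v := by
    rw [← Finset.sum_add_distrib]
    exact Finset.sum_congr rfl fun v _ => by ring
  have hstepv : ∀ v, x' v - x v ≤ δ * (1 - x v) := by
    intro v; rw [hx'def]; dsimp only
    have h1 : δ * (z v * (1 - x v)) ≤ δ * (1 * (1 - x v)) :=
      mul_le_mul_of_nonneg_left
        (mul_le_mul_of_nonneg_right (hz v).2 (by linarith [(hx v).2])) hδ0.le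
    linarith
  have hstep0 : ∀ v, 0 ≤ x' v - x v := fun v => by linarith [hxx' v]
  have hbnd1 : -(δ * Xi) ≤ ∑ v ∈ (univ : Finset S).erase s, (x' v - x v) * d v := by
    rw [hXi, Finset.mul_sum, ← Finset.sum_neg_distrib]
    refine Finset.sum_le_sum fun v _ => ?_
    have h1 : (x' v - x v) * (τ - d v) ≤ δ * ((1 - x v) * (τ - d v)) := by
      rw [← mul_assoc]
      exact mul_le_mul_of_nonneg_right (hstepv v) (by linarith [hdle v])
    nlinarith [hstep0 v, hτ0, mul_nonneg (hstep0 v) hτ0]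
  -- Sx bounds
  set Sx : ℝ := ∑ v ∈ (univ : Finset S).erase s, (1 - x v) with hSx
  have hSx0 : 0 ≤ Sx := Finset.sum_nonneg fun v _ => by linarith [(hx v).2]
  have hSxn : Sx ≤ n := by
    have h1 : Sx ≤ ∑ _v ∈ (univ : Finset S).erase s, (1:ℝ) :=
      Finset.sum_le_sum fun v _ => by linarith [(hx v).1]
    rw [Finset.sum_const, nsmul_eq_mul, mul_one] at h1
    have h2 : (((univ : Finset S).erase s).card : ℝ) ≤ n := by
      rw [hn]
      exact_mod_cast Finset.card_le_univ _
    linarith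
  have hXieq : Xi = τ * Sx - ∑ v ∈ (univ : Finset S).erase s, (1 - x v) * d v := by
    rw [hXi, hSx, Finset.mul_sum, ← Finset.sum_sub_distrib]
    exact Finset.sum_congr rfl fun v _ => by ring
  -- ∑ x' v bound
  have hsum_x' : ∑ v ∈ (univ : Finset S).erase s, x' v
      ≤ (n - 1) - (1 - δ) * Sx := by
    have hcard : (((univ : Finset S).erase s).card : ℝ) = n - 1 := by
      rw [Finset.card_erase_of_mem (Finset.mem_univ s), Finset.card_univ, hn]
      have h1 : (1:ℕ) ≤ Fintype.card S := Fintype.card_pos_iff.mpr ⟨s⟩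
      push_cast [Nat.cast_sub h1]
      ring
    have h1 : ∀ v, x' v ≤ 1 - (1 - δ) * (1 - x v) := by
      intro v; rw [hx'def]; dsimp only
      have h2 : δ * ((1 - z v) * (1 - x v)) ≥ 0 :=
        mul_nonneg hδ0.le (mul_nonneg (by linarith [(hz v).2]) (by linarith [(hx v).2]))
      nlinarith [h2]
    calc ∑ v ∈ (univ : Finset S).erase s, x' v
        ≤ ∑ v ∈ (univ : Finset S).erase s, (1 - (1 - δ) * (1 - x v)) :=
          Finset.sum_le_sum fun v _ => h1 v
      _ = (n - 1) - (1 - δ) * Sx := by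
          rw [Finset.sum_sub_distrib, Finset.sum_const, nsmul_eq_mul, mul_one, hcard,
            ← Finset.mul_sum, hSx]
  -- assemble
  have hq1 : Xi ≤ τ * Sx - f univ + multilinearExt f w + δ * Xi := by
    linarith [hXieq, hsplit, hbnd1, hI2]
  have hq2 : multilinearExt f w ≤ τ * n - τ * Sx + δ * (τ * Sx) := by
    have h1 : τ * (1 + ∑ v ∈ (univ : Finset S).erase s, x' v)
        ≤ τ * (1 + ((n - 1) - (1 - δ) * Sx)) :=
      mul_le_mul_of_nonneg_left (by linarith [hsum_x']) hτ0
    have h2 : τ * (1 + ((n - 1) - (1 - δ) * Sx)) = τ * n - τ * Sx + δ * (τ * Sx) := by ring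
    linarith [hI3]
  have hδXi : δ * Xi ≤ (1/2) * Xi := mul_le_mul_of_nonneg_right hδh hXi0
  have hτSx : τ * Sx ≤ τ * n := mul_le_mul_of_nonneg_left hSxn hτ0
  have hδτSx : δ * (τ * Sx) ≤ (1/2) * (τ * n) := by
    have h1 : δ * (τ * Sx) ≤ (1/2) * (τ * Sx) :=
      mul_le_mul_of_nonneg_right hδh (mul_nonneg hτ0 hSx0)
    linarith
  have hfu : 0 ≤ f univ := hf0 univ
  have hτn : 0 ≤ τ * n := mul_nonneg hτ0 (by rw [hn]; positivity)
  calc ∑ v ∈ (univ : Finset S).erase s, (1 - x v) * (G v - d v) ≤ Xi := hmain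
    _ ≤ 3 * n * τ := by nlinarith [hq1, hq2, hδXi, hτSx, hδτSx, hfu, hτn]

lemma inner_drop (hf : Submodular f) (x x' : S → ℝ)
    (hx : ∀ t, x t ∈ Set.Icc (0:ℝ) 1) (hx' : ∀ t, x' t ∈ Set.Icc (0:ℝ) 1)
    (hxx' : ∀ t, x t ≤ x' t) (s : S) (T : Finset S) (hs : s ∉ T) :
    (1 - x s) * (multilinearExt (Dmarg f s) x - multilinearExt (Dmarg f s) (mixv x x' T))
      ≤ ∑ v ∈ T, (x' v - x v) *
          (multilinearExt (Dmarg f v) x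
            - multilinearExt (Dmarg f v) (Function.update x' s 1)) := by
  induction T using Finset.induction_on with
  | empty => rw [mixv_empty]; simp
  | @insert v T hv IH =>
    have hsv : s ≠ v := fun h => hs (h ▸ Finset.mem_insert_self v T)
    have hsT : s ∉ T := fun h => hs (Finset.mem_insert_of_mem h)
    set m : S → ℝ := mixv x x' T with hm
    have hmI : ∀ t, m t ∈ Set.Icc (0:ℝ) 1 := mixv_Icc hx hx' T
    have hmv : m v = x v := by simp [hm, mixv, hv]
    have hms : m s = x s := by simp [hm, mixv, hsT]
    -- affine identity at coordinate v
    set E0 : ℝ := multilinearExt (fun B => Dmarg f s (B.erase v)) m with hE0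
    set E1 : ℝ := multilinearExt (fun B => Dmarg f s (insert v B)) m with hE1
    have key : multilinearExt (Dmarg f s) (mixv x x' (insert v T))
        = multilinearExt (Dmarg f s) m + (x' v - x v) * (E1 - E0) := by
      rw [mixv_insert v T, ← hm, mExt_update]
      have hmm : multilinearExt (Dmarg f s) m = (1 - x v) * E0 + x v * E1 := by
        conv_lhs => rw [← Function.update_eq_self v m, hmv]
        rw [mExt_update]
      rw [hmm, hE0, hE1]
      ring
    -- symmetry swap
    set F0 : ℝ := multilinearExt (fun B => Dmarg f v (B.erase s)) m with hF0
    set F1 : ℝ := multilinearExt (fun B => Dmarg f v (insert s B)) m with hF1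
    have hsym : E0 - E1 = F0 - F1 := by
      rw [hE0, hE1, hF0, hF1, ← mExt_sub, ← mExt_sub]
      congr 1
      funext B
      exact pairSym f hsv B
    -- identity : (1 - x s) * (F0 - F1) = d_v(m) - d_v(update m s 1)
    have hident : (1 - x s) * (F0 - F1)
        = multilinearExt (Dmarg f v) m
          - multilinearExt (Dmarg f v) (Function.update m s 1) := by
      have hmm : multilinearExt (Dmarg f v) m = (1 - x s) * F0 + x s * F1 := by
        conv_lhs => rw [← Function.update_eq_self s m, hms]
        rw [mExt_update]
      have h1 : multilinearExt (Dmarg f v) (Function.update m s 1) = F1 := by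
        rw [mExt_update_one]
      rw [hmm, h1]
      ring
    -- bounds
    have hb1 : multilinearExt (Dmarg f v) m ≤ multilinearExt (Dmarg f v) x :=
      mExt_Dmarg_anti hf hx hmI (mixv_ge hxx' T) v
    have hupdI : ∀ t, Function.update m s 1 t ∈ Set.Icc (0:ℝ) 1 := by
      intro t
      rcases eq_or_ne t s with rfl | h
      · rw [Function.update_self]; exact ⟨zero_le_one, le_refl 1⟩
      · rw [Function.update_of_ne h]; exact hmI t
    have hupdI' : ∀ t, Function.update x' s 1 t ∈ Set.Icc (0:ℝ) 1 := by
      intro t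
      rcases eq_or_ne t s with rfl | h
      · rw [Function.update_self]; exact ⟨zero_le_one, le_refl 1⟩
      · rw [Function.update_of_ne h]; exact hx' t
    have hb2 : multilinearExt (Dmarg f v) (Function.update x' s 1)
        ≤ multilinearExt (Dmarg f v) (Function.update m s 1) := by
      refine mExt_Dmarg_anti hf hupdI hupdI' ?_ v
      intro t
      rcases eq_or_ne t s with rfl | h
      · rw [Function.update_self, Function.update_self]
      · rw [Function.update_of_ne h, Function.update_of_ne h]
        exact mixv_le hxx' T t
    have hcoef : 0 ≤ x' v - x v := by linarith [hxx' v]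
    have hterm : (1 - x s) * (multilinearExt (Dmarg f s) m
          - multilinearExt (Dmarg f s) (mixv x x' (insert v T)))
        ≤ (x' v - x v) * (multilinearExt (Dmarg f v) x
            - multilinearExt (Dmarg f v) (Function.update x' s 1)) := by
      rw [key]
      have h1 : (1 - x s) * (multilinearExt (Dmarg f s) m
          - (multilinearExt (Dmarg f s) m + (x' v - x v) * (E1 - E0)))
          = (x' v - x v) * ((1 - x s) * (F0 - F1)) := by
        rw [← hsym]; ring
      rw [h1, hident]
      exact mul_le_mul_of_nonneg_left (by linarith [hb1, hb2]) hcoef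
    rw [Finset.sum_insert hv]
    have hIH := IH hsT
    linarith [hterm, hIH]

lemma drop_step (hf : Submodular f) (hf0 : ∀ A, 0 ≤ f A) (hτs : ∀ s : S, f {s} ≤ τ)
    (hτ0 : 0 ≤ τ) (x z x' : S → ℝ)
    (hx : ∀ t, x t ∈ Set.Icc (0:ℝ) 1) (hz : ∀ t, z t ∈ Set.Icc (0:ℝ) 1)
    (hx'def : x' = fun t => x t + δ * (z t * (1 - x t)))
    (hδ0 : 0 < δ) (hδ1 : δ ≤ 1) (s : S) (T : Finset S) (hs : s ∉ T) :
    (x' s - x s) * (multilinearExt (Dmarg f s) x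
        - multilinearExt (Dmarg f s) (mixv x x' T))
      ≤ 3 * δ^2 * (Fintype.card S : ℝ) * τ := by
  set n : ℝ := (Fintype.card S : ℝ) with hn
  have hn0 : 0 ≤ n := by rw [hn]; positivity
  have hzx : ∀ t, 0 ≤ δ * (z t * (1 - x t)) := fun t =>
    mul_nonneg hδ0.le (mul_nonneg (hz t).1 (by linarith [(hx t).2]))
  have hzx1 : ∀ t, δ * (z t * (1 - x t)) ≤ 1 - x t := by
    intro t
    have h1 : (1 - δ * z t) * (1 - x t) ≥ 0 :=
      mul_nonneg (by nlinarith [(hz t).2, (hz t).1, hδ0.le, hδ1]) (by linarith [(hx t).2])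
    nlinarith
  have hx'I : ∀ t, x' t ∈ Set.Icc (0:ℝ) 1 := by
    intro t
    rw [hx'def]
    exact ⟨by dsimp only; linarith [hzx t, (hx t).1], by dsimp only; linarith [hzx1 t]⟩
  have hxx' : ∀ t, x t ≤ x' t := by
    intro t; rw [hx'def]; dsimp only; linarith [hzx t]
  have hstepv : ∀ v, x' v - x v ≤ δ * (1 - x v) := by
    intro v; rw [hx'def]; dsimp only
    have h1 : δ * (z v * (1 - x v)) ≤ δ * (1 * (1 - x v)) :=
      mul_le_mul_of_nonneg_left
        (mul_le_mul_of_nonneg_right (hz v).2 (by linarith [(hx v).2])) hδ0.le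
    linarith
  have hstep0 : ∀ v, 0 ≤ x' v - x v := fun v => by linarith [hxx' v]
  have hmI : ∀ t, mixv x x' T t ∈ Set.Icc (0:ℝ) 1 := mixv_Icc hx hx'I T
  have hdrop0 : 0 ≤ multilinearExt (Dmarg f s) x
      - multilinearExt (Dmarg f s) (mixv x x' T) := by
    have := mExt_Dmarg_anti hf hx hmI (mixv_ge hxx' T) s
    linarith
  rcases le_or_gt δ (1/2) with hδh | hδh
  · -- fine case
    have hinner := inner_drop hf x x' hx hx'I hxx' s T hs
    have hTsub : T ⊆ (univ : Finset S).erase s := by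
      intro v hv
      exact Finset.mem_erase.mpr ⟨fun h => hs (h ▸ hv), Finset.mem_univ v⟩
    have hbrk : ∀ v, 0 ≤ multilinearExt (Dmarg f v) x
        - multilinearExt (Dmarg f v) (Function.update x' s 1) := by
      intro v
      have hupdI' : ∀ t, Function.update x' s 1 t ∈ Set.Icc (0:ℝ) 1 := by
        intro t
        rcases eq_or_ne t s with rfl | h
        · rw [Function.update_self]; exact ⟨zero_le_one, le_refl 1⟩
        · rw [Function.update_of_ne h]; exact hx'I t
      have hle : ∀ t, x t ≤ Function.update x' s 1 t := by
        intro t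
        rcases eq_or_ne t s with rfl | h
        · rw [Function.update_self]; exact (hx t).2
        · rw [Function.update_of_ne h]; exact hxx' t
      have := mExt_Dmarg_anti hf hx hupdI' hle v
      linarith
    have h2 : ∑ v ∈ T, (x' v - x v) * (multilinearExt (Dmarg f v) x
          - multilinearExt (Dmarg f v) (Function.update x' s 1))
        ≤ δ * ∑ v ∈ (univ : Finset S).erase s, (1 - x v) *
          (multilinearExt (Dmarg f v) x
            - multilinearExt (Dmarg f v) (Function.update x' s 1)) := by
      rw [Finset.mul_sum]
      refine Finset.sum_le_sum_of_subset_of_nonneg hTsub ?_ |>.trans ?_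
      · intro v _ _
        exact mul_nonneg (hstep0 v) (hbrk v)
      · refine Finset.sum_le_sum fun v _ => ?_
        rw [← mul_assoc]
        exact mul_le_mul_of_nonneg_right (hstepv v) (hbrk v)
    have h3 := xi_bound hf hf0 hτs hτ0 x z x' hx hz hx'def hδ0 hδh s
    have h4 : (1 - x s) * (multilinearExt (Dmarg f s) x
        - multilinearExt (Dmarg f s) (mixv x x' T)) ≤ δ * (3 * n * τ) := by
      calc (1 - x s) * _ ≤ _ := hinner
        _ ≤ _ := h2
        _ ≤ δ * (3 * n * τ) := by
            rw [← hn] at h3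
            exact mul_le_mul_of_nonneg_left h3 hδ0.le
    have h5 : (x' s - x s) * (multilinearExt (Dmarg f s) x
        - multilinearExt (Dmarg f s) (mixv x x' T))
        ≤ δ * ((1 - x s) * (multilinearExt (Dmarg f s) x
          - multilinearExt (Dmarg f s) (mixv x x' T))) := by
      rw [← mul_assoc]
      exact mul_le_mul_of_nonneg_right (hstepv s) hdrop0
    nlinarith [h4, h5, hδ0.le]
  · -- crude case
    rcases T.eq_empty_or_nonempty with rfl | hT
    · rw [mixv_empty]
      simp only [sub_self, mul_zero]
      positivity
    · obtain ⟨t, ht⟩ := hT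
      have hts : t ∈ (univ : Finset S).erase s :=
        Finset.mem_erase.mpr ⟨fun h => hs (h ▸ ht), Finset.mem_univ t⟩
      have hne : ((univ : Finset S).erase s).Nonempty := ⟨t, hts⟩
      have hcard1 : (1:ℕ) ≤ Fintype.card S := Fintype.card_pos_iff.mpr ⟨s⟩
      have hcard : ((((univ : Finset S).erase s).card : ℕ) : ℝ) = n - 1 := by
        rw [Finset.card_erase_of_mem (Finset.mem_univ s), Finset.card_univ, hn]
        push_cast [Nat.cast_sub hcard1]
        ring
      have hG : multilinearExt (Dmarg f s) x ≤ τ :=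
        mExt_le_const hx (Dmarg_le_tau hf hf0 hτs s)
      have hbeta : -(multilinearExt (Dmarg f s) (mixv x x' T))
          ≤ f ((univ : Finset S).erase s) - f univ := by
        have h1 : multilinearExt (fun A => (0:ℝ) - Dmarg f s A) (mixv x x' T)
            ≤ f ((univ : Finset S).erase s) - f univ :=
          mExt_le_const hmI fun A => by linarith [neg_Dmarg_le_beta hf s A]
        rw [mExt_sub, mExt_const] at h1
        linarith
      have hfe : f ((univ : Finset S).erase s) ≤ (n - 1) * τ := by
        have := f_le_card hf hf0 hτs _ hne
        rw [hcard] at this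
        exact this
      have hfu : 0 ≤ f univ := hf0 univ
      have hdrop : multilinearExt (Dmarg f s) x
          - multilinearExt (Dmarg f s) (mixv x x' T) ≤ n * τ := by
        nlinarith [hG, hbeta, hfe, hfu, hτ0]
      have hcoef : x' s - x s ≤ δ := by
        have h1 := hstepv s
        have h2 : δ * (1 - x s) ≤ δ * 1 :=
          mul_le_mul_of_nonneg_left (by linarith [(hx s).1]) hδ0.le
        linarith
      have h5 : (x' s - x s) * (multilinearExt (Dmarg f s) x
          - multilinearExt (Dmarg f s) (mixv x x' T)) ≤ δ * (n * τ) := by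
        have := mul_le_mul hcoef hdrop hdrop0 hδ0.le
        linarith
      have h6 : δ * (n * τ) ≤ 3 * δ^2 * n * τ := by
        have h7 : 0 ≤ (3*δ - 1) * (δ * (n*τ)) :=
          mul_nonneg (by linarith) (mul_nonneg hδ0.le (mul_nonneg hn0 hτ0))
        nlinarith [h7]
      linarith

lemma curv (hf : Submodular f) (hf0 : ∀ A, 0 ≤ f A) (hτs : ∀ s : S, f {s} ≤ τ)
    (hτ0 : 0 ≤ τ) (x z x' : S → ℝ)
    (hx : ∀ t, x t ∈ Set.Icc (0:ℝ) 1) (hz : ∀ t, z t ∈ Set.Icc (0:ℝ) 1)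
    (hx'def : x' = fun t => x t + δ * (z t * (1 - x t)))
    (hδ0 : 0 < δ) (hδ1 : δ ≤ 1) :
    multilinearExt f x
      + δ * (∑ s : S, z s * (1 - x s) * multilinearExt (Dmarg f s) x)
      - 3 * δ^2 * (Fintype.card S : ℝ)^2 * τ
      ≤ multilinearExt f x' := by
  set n : ℝ := (Fintype.card S : ℝ) with hn
  have key : ∀ T : Finset S,
      multilinearExt f x + (∑ t ∈ T, (x' t - x t) * multilinearExt (Dmarg f t) x)
        - (T.card : ℝ) * (3 * δ^2 * n * τ)
        ≤ multilinearExt f (mixv x x' T) := by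
    intro T
    induction T using Finset.induction_on with
    | empty => rw [mixv_empty]; simp
    | @insert u T hu IH =>
      set m : S → ℝ := mixv x x' T with hm
      have hmu : m u = x u := by simp [hm, mixv, hu]
      have hstep : multilinearExt f (mixv x x' (insert u T))
          = multilinearExt f m + (x' u - x u) * multilinearExt (Dmarg f u) m := by
        rw [mixv_insert u T, ← hm, mExt_update]
        have hmm : multilinearExt f m
            = (1 - x u) * multilinearExt (fun B => f (B.erase u)) m
              + x u * multilinearExt (fun B => f (insert u B)) m := by
          conv_lhs => rw [← Function.update_eq_self u m, hmu]
          rw [mExt_update]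
        have hD : multilinearExt (Dmarg f u) m
            = multilinearExt (fun B => f (insert u B)) m
              - multilinearExt (fun B => f (B.erase u)) m := by
          rw [← mExt_sub]; rfl
        rw [hmm, hD]
        ring
      have hds := drop_step hf hf0 hτs hτ0 x z x' hx hz hx'def hδ0 hδ1 u T hu
      rw [← hm, ← hn] at hds
      have hcard : ((insert u T).card : ℝ) = (T.card : ℝ) + 1 := by
        rw [Finset.card_insert_of_notMem hu]; push_cast; ring
      rw [Finset.sum_insert hu, hstep, hcard]
      nlinarith [IH, hds]
  have h := key univ
  rw [mixv_univ] at h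
  have he : ∑ t : S, (x' t - x t) * multilinearExt (Dmarg f t) x
      = δ * ∑ s : S, z s * (1 - x s) * multilinearExt (Dmarg f s) x := by
    rw [Finset.mul_sum]
    refine Finset.sum_congr rfl fun t _ => ?_
    rw [hx'def]
    dsimp only
    ring
  rw [he] at h
  have hcu : ((univ : Finset S).card : ℝ) = n := by rw [Finset.card_univ, hn]
  rw [hcu] at h
  nlinarith [h]

end Curvature

end PerStepAux

open PerStepAux in
/-- Deterministic form of the per-step progress lemma (Lemma 6). -/
theorem per_step_progress {S : Type*} [Fintype S] [DecidableEq S] [Nonempty S]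
    (f : Finset S → ℝ) (hf : Submodular f) (hf0 : ∀ A : Finset S, 0 ≤ f A)
    (ℓ : S → ℝ)
    (τ : ℝ) (hτ : τ = Finset.univ.sup' Finset.univ_nonempty fun s => f {s})
    (ε : ℝ) (hε : 0 < ε)
    (δ : ℝ) (hδ0 : 0 < δ) (hδ1 : δ ≤ 1) (hδn : δ ≤ ε / (Fintype.card S : ℝ) ^ 2)
    (c : ℝ) (hc0 : 0 < c) (hc1 : c ≤ 1)
    (x z : S → ℝ) (hx : ∀ t, x t ∈ Set.Icc (0 : ℝ) 1) (hz : ∀ t, z t ∈ Set.Icc (0 : ℝ) 1)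
    (x' : S → ℝ) (hx' : x' = fun t => x t + δ * (z t * (1 - x t)))
    (w : S → ℝ)
    (hw : ∀ s : S, |w s - (multilinearExt f (fun t => max (x t) (indVec ({s} : Finset S) t))
        - multilinearExt f (fun t => min (x t) (indVec ({s}ᶜ : Finset S) t)))|
        ≤ 2 * ε * τ / (Fintype.card S : ℝ))
    (O : Finset S)
    (hO : ∑ s : S, z s * (1 - x s) * (c * w s + ℓ s)
        ≥ ∑ o ∈ O, (1 - x o) * (c * w o + ℓ o)) :
    ((1 + δ) * c * multilinearExt f x' + (∑ s : S, ℓ s * x' s)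
        - c * multilinearExt f x - (∑ s : S, ℓ s * x s)) / δ
      ≥ c * (multilinearExt f (fun t => max (x t) (indVec O t))
            + multilinearExt f x' - multilinearExt f x)
        + (∑ o ∈ O, ℓ o * (1 - x o)) - 5 * ε * τ := by
  classical
  set n : ℝ := (Fintype.card S : ℝ) with hn
  have hn1 : (1:ℝ) ≤ n := by
    rw [hn]
    exact_mod_cast Fintype.card_pos
  have hn0 : (0:ℝ) < n := lt_of_lt_of_le zero_lt_one hn1
  have hτs : ∀ s : S, f {s} ≤ τ := by
    intro s
    rw [hτ]
    exact Finset.le_sup' (fun s => f {s}) (Finset.mem_univ s)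
  have hτ0 : 0 ≤ τ := by
    obtain ⟨s⟩ := ‹Nonempty S›
    exact le_trans (hf0 {s}) (hτs s)
  set G : S → ℝ := fun s => multilinearExt (Dmarg f s) x with hG
  -- rewriting the max/min functions
  have emax : ∀ O' : Finset S, (fun t => max (x t) (indVec O' t))
      = (fun t => if t ∈ O' then (1:ℝ) else x t) := by
    intro O'
    funext t
    by_cases h : t ∈ O'
    · simp [indVec, h, max_eq_right (hx t).2]
    · simp [indVec, h, max_eq_left (hx t).1]
  have hwG : ∀ s : S, |w s - G s| ≤ 2 * ε * τ / n := by
    intro s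
    have h := hw s
    have e1 : multilinearExt f (fun t => max (x t) (indVec ({s} : Finset S) t))
        = multilinearExt (fun A => f (insert s A)) x := by
      rw [emax ({s} : Finset S), mExt_subst]
      congr 1
      funext A
      congr 1
      ext t; simp [Finset.mem_insert, Finset.mem_union, Finset.mem_singleton]
    have e2 : multilinearExt f (fun t => min (x t) (indVec (({s} : Finset S)ᶜ) t))
        = multilinearExt (fun A => f (A.erase s)) x := by
      have e2' : (fun t => min (x t) (indVec (({s} : Finset S)ᶜ) t))
          = Function.update x s 0 := by
        funext t
        rcases eq_or_ne t s with rfl | hts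
        · have : t ∉ ({t} : Finset S)ᶜ := by simp
          simp [indVec, this, min_eq_right (hx t).1, Function.update_self]
        · have : t ∈ ({s} : Finset S)ᶜ := by simp [hts]
          simp [indVec, this, min_eq_left (hx t).2, Function.update_of_ne hts]
      rw [e2', mExt_update_zero]
    rw [e1, e2, ← mExt_sub] at h
    have : multilinearExt (fun A => f (insert s A) - f (A.erase s)) x = G s := rfl
    rw [this] at h
    exact h
  -- curvature bound
  have hδn' : δ * n^2 ≤ ε := by
    rw [hn]
    have h2 : (0:ℝ) < (Fintype.card S : ℝ)^2 := by positivity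
    calc δ * (Fintype.card S : ℝ)^2
        ≤ (ε / (Fintype.card S : ℝ)^2) * (Fintype.card S : ℝ)^2 :=
          mul_le_mul_of_nonneg_right hδn (le_of_lt h2)
      _ = ε := by field_simp
  have hcurv := curv hf hf0 hτs hτ0 x z x' hx hz hx' hδ0 hδ1
  rw [← hn] at hcurv
  set F : ℝ := multilinearExt f x with hF
  set F' : ℝ := multilinearExt f x' with hF'
  set P : ℝ := ∑ s : S, z s * (1 - x s) * G s with hP
  have hcurv' : F + δ * P - 3 * δ * (ε * τ) ≤ F' := by
    have h1 : 3 * δ^2 * n^2 * τ ≤ 3 * δ * (ε * τ) := by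
      have h2 : δ * n^2 * (δ * τ) ≤ ε * (δ * τ) :=
        mul_le_mul_of_nonneg_right hδn' (mul_nonneg hδ0.le hτ0)
      nlinarith [h2]
    linarith [hcurv, h1]
  -- I5 bound
  have hI5 := I5 hf hx O
  set FO : ℝ := multilinearExt f (fun t => if t ∈ O then (1:ℝ) else x t) with hFO
  set Qg : ℝ := ∑ o ∈ O, (1 - x o) * G o with hQg
  have hI5' : FO ≤ F + Qg := by
    rw [hFO, hQg, hF, hG]
    exact hI5
  -- combined w-error bound
  set Pw : ℝ := ∑ s : S, z s * (1 - x s) * w s with hPw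
  set Qw : ℝ := ∑ o ∈ O, (1 - x o) * w o with hQw
  have hWbig : (P - Qg) - (Pw - Qw) ≥ -(2 * (ε * τ)) := by
    have eQg : Qg = ∑ s : S, (if s ∈ O then (1 - x s) * G s else 0) := by
      rw [hQg]
      rw [Finset.sum_ite_mem]
      congr 1
      exact Finset.univ_inter O |>.symm ▸ rfl
    have eQw : Qw = ∑ s : S, (if s ∈ O then (1 - x s) * w s else 0) := by
      rw [hQw]
      rw [Finset.sum_ite_mem]
      congr 1
      exact Finset.univ_inter O |>.symm ▸ rfl
    have hper : ∀ s : S, -(2 * (ε * τ) / n)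
        ≤ (z s * (1 - x s) * G s - (if s ∈ O then (1 - x s) * G s else 0))
          - (z s * (1 - x s) * w s - (if s ∈ O then (1 - x s) * w s else 0)) := by
      intro s
      have habs : |G s - w s| ≤ 2 * ε * τ / n := by
        rw [abs_sub_comm]; exact hwG s
      by_cases h : s ∈ O
      · simp only [h, if_pos]
        have e : (z s * (1 - x s) * G s - (1 - x s) * G s)
            - (z s * (1 - x s) * w s - (1 - x s) * w s)
            = ((z s - 1) * (1 - x s)) * (G s - w s) := by ring
        rw [e]
        set a : ℝ := (z s - 1) * (1 - x s) with ha
        have ha1 : |a| ≤ 1 := by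
          rw [ha, abs_mul]
          have h1 : |z s - 1| ≤ 1 := by
            rw [abs_le]; constructor <;> [linarith [(hz s).1]; linarith [(hz s).2]]
          have h2 : |1 - x s| ≤ 1 := by
            rw [abs_le]; constructor <;> [linarith [(hx s).2]; linarith [(hx s).1]]
          calc |z s - 1| * |1 - x s| ≤ 1 * 1 :=
            mul_le_mul h1 h2 (abs_nonneg _) zero_le_one
          _ = 1 := by ring
        have h3 : -(|a| * |G s - w s|) ≤ a * (G s - w s) := by
          have := neg_abs_le (a * (G s - w s))
          rw [abs_mul] at this
          linarith
        have h4 : |a| * |G s - w s| ≤ 1 * (2 * ε * τ / n) :=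
          mul_le_mul ha1 habs (abs_nonneg _) zero_le_one
        have e2 : 2 * (ε * τ) / n = 2 * ε * τ / n := by ring
        rw [e2]
        linarith
      · simp only [h, if_neg, not_false_iff, sub_zero]
        have e : z s * (1 - x s) * G s - z s * (1 - x s) * w s
            = (z s * (1 - x s)) * (G s - w s) := by ring
        rw [e]
        set a : ℝ := z s * (1 - x s) with ha
        have ha1 : |a| ≤ 1 := by
          rw [ha, abs_mul]
          have h1 : |z s| ≤ 1 := by
            rw [abs_le]; constructor <;> [linarith [(hz s).1]; linarith [(hz s).2]]
          have h2 : |1 - x s| ≤ 1 := by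
            rw [abs_le]; constructor <;> [linarith [(hx s).2]; linarith [(hx s).1]]
          calc |z s| * |1 - x s| ≤ 1 * 1 :=
            mul_le_mul h1 h2 (abs_nonneg _) zero_le_one
          _ = 1 := by ring
        have h3 : -(|a| * |G s - w s|) ≤ a * (G s - w s) := by
          have := neg_abs_le (a * (G s - w s))
          rw [abs_mul] at this
          linarith
        have h4 : |a| * |G s - w s| ≤ 1 * (2 * ε * τ / n) :=
          mul_le_mul ha1 habs (abs_nonneg _) zero_le_one
        have e2 : 2 * (ε * τ) / n = 2 * ε * τ / n := by ring
        rw [e2]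
        linarith
    have hsum : ∑ s : S, (-(2 * (ε * τ) / n))
        ≤ ∑ s : S, ((z s * (1 - x s) * G s - (if s ∈ O then (1 - x s) * G s else 0))
          - (z s * (1 - x s) * w s - (if s ∈ O then (1 - x s) * w s else 0))) :=
      Finset.sum_le_sum fun s _ => hper s
    have hsc : ∑ _s : S, (-(2 * (ε * τ) / n)) = -(2 * (ε * τ)) := by
      rw [Finset.sum_const, nsmul_eq_mul, Finset.card_univ, ← hn]
      field_simp
    have hss : ∑ s : S, ((z s * (1 - x s) * G s - (if s ∈ O then (1 - x s) * G s else 0))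
          - (z s * (1 - x s) * w s - (if s ∈ O then (1 - x s) * w s else 0)))
        = (P - Qg) - (Pw - Qw) := by
      rw [hP, hPw, eQg, eQw]
      rw [← Finset.sum_sub_distrib, ← Finset.sum_sub_distrib, ← Finset.sum_sub_distrib]
    rw [hsc, hss] at hsum
    linarith
  -- hO expanded
  set Lz : ℝ := ∑ s : S, ℓ s * (z s * (1 - x s)) with hLz
  set B3 : ℝ := ∑ o ∈ O, ℓ o * (1 - x o) with hB3
  have hOexp : c * Pw + Lz ≥ c * Qw + B3 := by
    have e1 : ∑ s : S, z s * (1 - x s) * (c * w s + ℓ s) = c * Pw + Lz := by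
      rw [hPw, hLz, Finset.mul_sum, ← Finset.sum_add_distrib]
      exact Finset.sum_congr rfl fun s _ => by ring
    have e2 : ∑ o ∈ O, (1 - x o) * (c * w o + ℓ o) = c * Qw + B3 := by
      rw [hQw, hB3, Finset.mul_sum, ← Finset.sum_add_distrib]
      exact Finset.sum_congr rfl fun o _ => by ring
    rw [e1, e2] at hO
    exact hO
  -- linear part
  have hL : ∑ s : S, ℓ s * x' s = (∑ s : S, ℓ s * x s) + δ * Lz := by
    rw [hLz, Finset.mul_sum, ← Finset.sum_add_distrib]
    refine Finset.sum_congr rfl fun s _ => ?_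
    rw [hx']
    dsimp only
    ring
  -- final assembly
  rw [emax O, ← hFO, hL]
  rw [ge_iff_le, le_div_iff₀ hδ0]
  have m1 : c * (δ * P - 3 * δ * (ε * τ)) ≤ c * (F' - F) :=
    mul_le_mul_of_nonneg_left (by linarith [hcurv']) hc0.le
  have m2 : c * (-(2 * (ε * τ))) ≤ c * ((P - Qg) - (Pw - Qw)) :=
    mul_le_mul_of_nonneg_left (by linarith [hWbig]) hc0.le
  have m4 : c * FO ≤ c * (F + Qg) := mul_le_mul_of_nonneg_left hI5' hc0.le
  have dm2 : δ * (c * (-(2 * (ε * τ)))) ≤ δ * (c * ((P - Qg) - (Pw - Qw))) :=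
    mul_le_mul_of_nonneg_left m2 hδ0.le
  have dm3 : δ * (c * Qw + B3) ≤ δ * (c * Pw + Lz) :=
    mul_le_mul_of_nonneg_left hOexp hδ0.le
  have dm4 : δ * (c * FO) ≤ δ * (c * (F + Qg)) :=
    mul_le_mul_of_nonneg_left m4 hδ0.le
  have aux : c * (ε * τ) ≤ ε * τ := by
    nlinarith [mul_nonneg hε.le hτ0]
  have daux : δ * (c * (ε * τ)) ≤ δ * (ε * τ) :=
    mul_le_mul_of_nonneg_left aux hδ0.le
  nlinarith [m1, dm2, dm3, dm4, daux, hδ0.le, hτ0, hε.le]
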